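/- With the same notation (α, β on the unit circle, αβ = 1, λ(p^ν) = ∑_{j=0}^ν α^{ν−j}β^j, σ(p^n) = ∑_{m=0}^n λ(p^m)), for Re(s) > 0 one has ∑_{h=0}^∞ σ(p^{2h+1}) p^{−sh} = (1 − p^{−s})^{−1} (1 − α² p^{−s})^{−1} (1 − β² p^{−s})^{−1} (1 + λ(p) + p^{−s}), where λ(p) = α + β. -/

import Mathlib

open Finset

private noncomputable def lamf (α β : ℂ) (m : ℕ) : ℂ := ∑ j ∈ Finset.range (m + 1), α ^ (m - j) * β ^ j

private noncomputable def af (α β : ℂ) (h : ℕ) : ℂ := ∑ m ∈ Finset.range (2 * h + 2), lamf α β m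

private noncomputable def c1f (α β : ℂ) (h : ℕ) : ℂ := lamf α β (2 * h) + lamf α β (2 * h + 1)

private noncomputable def c2f (α β : ℂ) : ℕ → ℂ
  | 0 => lamf α β 0 + lamf α β 1
  | (h + 1) => β ^ (2 * h) * (1 + β) * (1 + β ^ 2)

private noncomputable def c3f (α β : ℂ) : ℕ → ℂ
  | 0 => 1 + (α + β)
  | 1 => 1
  | _ => 0

private lemma lamf_norm_le (α β : ℂ) (hα : ‖α‖ = 1) (hβ : ‖β‖ = 1) (m : ℕ) :
    ‖lamf α β m‖ ≤ m + 1 := by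
  calc ‖lamf α β m‖ ≤ ∑ j ∈ Finset.range (m + 1), ‖α ^ (m - j) * β ^ j‖ := norm_sum_le _ _
    _ = ∑ j ∈ Finset.range (m + 1), 1 := by
        refine Finset.sum_congr rfl fun j hj => ?_
        simp [norm_mul, norm_pow, hα, hβ]
    _ = m + 1 := by simp
    _ ≤ m + 1 := le_refl _

private lemma lamf_shift (α β : ℂ) (hαβ : α * β = 1) (m : ℕ) :
    lamf α β (m + 2) = α ^ 2 * lamf α β m + (β ^ m + β ^ (m + 2)) := by
  unfold lamf
  have : m + 2 + 1 = (m + 1) + 1 + 1 := by omega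
  rw [this, Finset.sum_range_succ, Finset.sum_range_succ, Finset.mul_sum]
  have h1 : ∀ j ∈ Finset.range (m + 1),
      α ^ (m + 2 - j) * β ^ j = α ^ 2 * (α ^ (m - j) * β ^ j) := by
    intro j hj
    rw [Finset.mem_range] at hj
    have hj2 : m + 2 - j = (m - j) + 2 := by omega
    rw [hj2, pow_add]; ring
  rw [Finset.sum_congr rfl h1]
  have h2 : α ^ (m + 2 - (m + 1)) * β ^ (m + 1) = β ^ m := by
    have : m + 2 - (m + 1) = 1 := by omega
    rw [this, pow_one, pow_succ]
    calc α * (β ^ m * β) = (α * β) * β ^ m := by ring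
      _ = β ^ m := by rw [hαβ, one_mul]
  have h3 : α ^ (m + 2 - (m + 2)) * β ^ (m + 2) = β ^ (m + 2) := by simp
  rw [h2, h3]; ring

/-- key multiplication lemma: `(1 - γx) ∑ c_h x^h = ∑ c'_h x^h` when
`c' 0 = c 0` and `c' (h+1) = c (h+1) - γ c h`. -/
private lemma mul_geom_shift {x γ : ℂ} (c c' : ℕ → ℂ)
    (h0 : c' 0 = c 0) (hrec : ∀ h, c' (h + 1) = c (h + 1) - γ * c h)
    (hc : Summable (fun h => c h * x ^ h)) (hc' : Summable (fun h => c' h * x ^ h)) :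
    (1 - γ * x) * ∑' h, c h * x ^ h = ∑' h, c' h * x ^ h := by
  have hcs : Summable (fun h => c (h + 1) * x ^ (h + 1)) :=
    (summable_nat_add_iff (f := fun h => c h * x ^ h) 1).2 hc
  have hcg : Summable (fun h => γ * x * (c h * x ^ h)) := hc.mul_left _
  have key : (∑' h, c' h * x ^ h)
      = c 0 * x ^ 0 + ∑' h, (c (h + 1) * x ^ (h + 1) - γ * x * (c h * x ^ h)) := by
    rw [hc'.tsum_eq_zero_add, h0]
    congr 1
    refine tsum_congr fun h => ?_
    rw [hrec]; ring
  rw [key, hcs.tsum_sub hcg, tsum_mul_left]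
  have := hc.tsum_eq_zero_add
  rw [sub_mul, one_mul]
  rw [this]
  ring

private lemma main_lemma (α β : ℂ) (hα : ‖α‖ = 1) (hβ : ‖β‖ = 1)
    (hαβ : α * β = 1) (x : ℂ) (hx : ‖x‖ < 1) :
    (∑' h : ℕ, af α β h * x ^ h) =
      (1 - x)⁻¹ * (1 - α ^ 2 * x)⁻¹ * (1 - β ^ 2 * x)⁻¹ * (1 + (α + β) + x) := by
  have hxnn : (0 : ℝ) ≤ ‖x‖ := norm_nonneg x
  have hx' : ‖(‖x‖)‖ < 1 := by simpa [abs_of_nonneg hxnn] using hx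
  have geom : Summable (fun h : ℕ => ‖x‖ ^ h) := summable_geometric_of_lt_one hxnn hx
  have pow1 : Summable (fun h : ℕ => (h : ℝ) * ‖x‖ ^ h) := by
    simpa using summable_pow_mul_geometric_of_norm_lt_one 1 hx'
  have pow2 : Summable (fun h : ℕ => (h : ℝ) ^ 2 * ‖x‖ ^ h) :=
    summable_pow_mul_geometric_of_norm_lt_one 2 hx'
  -- summability of a
  have hanorm : ∀ h : ℕ, ‖af α β h‖ ≤ (2 * h + 2 : ℝ) ^ 2 := by
    intro h
    calc ‖af α β h‖ ≤ ∑ m ∈ Finset.range (2 * h + 2), ‖lamf α β m‖ := norm_sum_le _ _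
      _ ≤ ∑ m ∈ Finset.range (2 * h + 2), (2 * h + 2 : ℝ) := by
          refine Finset.sum_le_sum fun m hm => ?_
          rw [Finset.mem_range] at hm
          calc ‖lamf α β m‖ ≤ m + 1 := lamf_norm_le α β hα hβ m
            _ ≤ (2 * h + 2 : ℝ) := by
              have hm0 : m + 1 ≤ 2 * h + 2 := hm
              have hm' : (m : ℝ) + 1 ≤ 2 * h + 2 := by exact_mod_cast hm0
              linarith
      _ = (2 * h + 2 : ℝ) ^ 2 := by
          rw [Finset.sum_const, Finset.card_range, nsmul_eq_mul]; push_cast; ring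
  have Sa : Summable (fun h : ℕ => af α β h * x ^ h) := by
    refine Summable.of_norm_bounded (g := fun h => (2 * h + 2 : ℝ) ^ 2 * ‖x‖ ^ h) ?_ ?_
    · have : Summable (fun h : ℕ =>
        4 * ((h : ℝ) ^ 2 * ‖x‖ ^ h) + (8 * ((h : ℝ) * ‖x‖ ^ h) + 4 * ‖x‖ ^ h)) :=
        (pow2.mul_left 4).add ((pow1.mul_left 8).add (geom.mul_left 4))
      refine this.congr fun h => ?_
      ring
    · intro h
      rw [norm_mul, norm_pow]
      exact mul_le_mul_of_nonneg_right (hanorm h) (by positivity)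
  -- summability of c1
  have Sc1 : Summable (fun h : ℕ => c1f α β h * x ^ h) := by
    refine Summable.of_norm_bounded (g := fun h => (4 * h + 4 : ℝ) * ‖x‖ ^ h) ?_ ?_
    · have : Summable (fun h : ℕ => 4 * ((h : ℝ) * ‖x‖ ^ h) + 4 * ‖x‖ ^ h) :=
        (pow1.mul_left 4).add (geom.mul_left 4)
      refine this.congr fun h => ?_
      ring
    · intro h
      rw [norm_mul, norm_pow]
      refine mul_le_mul_of_nonneg_right ?_ (by positivity)
      calc ‖c1f α β h‖ ≤ ‖lamf α β (2 * h)‖ + ‖lamf α β (2 * h + 1)‖ := norm_add_le _ _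
        _ ≤ ((2 * h : ℕ) + 1 : ℝ) + ((2 * h + 1 : ℕ) + 1 : ℝ) :=
            add_le_add (lamf_norm_le α β hα hβ _) (lamf_norm_le α β hα hβ _)
        _ = (4 * h + 4 : ℝ) - 1 := by push_cast; ring
        _ ≤ (4 * h + 4 : ℝ) := by linarith
  -- summability of c2
  have Sc2 : Summable (fun h : ℕ => c2f α β h * x ^ h) := by
    refine Summable.of_norm_bounded (g := fun h => 8 * ‖x‖ ^ h) (geom.mul_left 8) ?_
    intro h
    rw [norm_mul, norm_pow]
    refine mul_le_mul_of_nonneg_right ?_ (by positivity)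
    match h with
    | 0 =>
        calc ‖c2f α β 0‖ ≤ ‖lamf α β 0‖ + ‖lamf α β 1‖ := norm_add_le _ _
          _ ≤ ((0 : ℕ) + 1 : ℝ) + ((1 : ℕ) + 1 : ℝ) :=
              add_le_add (lamf_norm_le α β hα hβ 0) (lamf_norm_le α β hα hβ 1)
          _ ≤ 8 := by norm_num
    | (k + 1) =>
        have hb : ‖β‖ = 1 := hβ
        calc ‖c2f α β (k + 1)‖ = ‖β ^ (2 * k)‖ * ‖1 + β‖ * ‖1 + β ^ 2‖ := by
              simp [c2f, norm_mul]
          _ ≤ 1 * 2 * 2 := by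
              refine mul_le_mul (mul_le_mul ?_ ?_ (norm_nonneg _) (by norm_num)) ?_
                (norm_nonneg _) (by norm_num)
              · rw [norm_pow, hb, one_pow]
              · calc ‖1 + β‖ ≤ ‖(1 : ℂ)‖ + ‖β‖ := norm_add_le _ _
                  _ = 2 := by rw [hb]; norm_num
              · calc ‖1 + β ^ 2‖ ≤ ‖(1 : ℂ)‖ + ‖β ^ 2‖ := norm_add_le _ _
                  _ = 2 := by rw [norm_pow, hb]; norm_num
          _ ≤ 8 := by norm_num
  -- summability of c3
  have Sc3 : Summable (fun h : ℕ => c3f α β h * x ^ h) := by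
    refine summable_of_ne_finset_zero (s := {0, 1}) fun b hb => ?_
    match b with
    | 0 => simp at hb
    | 1 => simp at hb
    | (k + 2) => simp [c3f]
  -- step 1
  have step1 : (1 - 1 * x) * (∑' h, af α β h * x ^ h) = ∑' h, c1f α β h * x ^ h := by
    refine mul_geom_shift _ _ ?_ ?_ Sa Sc1
    · show c1f α β 0 = af α β 0
      simp [c1f, af, Finset.sum_range_succ]
    · intro h
      show c1f α β (h + 1) = af α β (h + 1) - 1 * af α β h
      have e1 : 2 * (h + 1) + 2 = (2 * h + 2) + 1 + 1 := by omega
      rw [c1f, af, af, e1, Finset.sum_range_succ, Finset.sum_range_succ]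
      ring
  -- step 2
  have step2 : (1 - α ^ 2 * x) * (∑' h, c1f α β h * x ^ h) = ∑' h, c2f α β h * x ^ h := by
    refine mul_geom_shift _ _ ?_ ?_ Sc1 Sc2
    · show c2f α β 0 = c1f α β 0
      simp [c2f, c1f]
    · intro h
      show c2f α β (h + 1) = c1f α β (h + 1) - α ^ 2 * c1f α β h
      have e1 : 2 * (h + 1) = 2 * h + 2 := by omega
      have e2 : 2 * h + 2 + 1 = (2 * h + 1) + 2 := by omega
      rw [c2f, c1f, c1f, e1, e2, lamf_shift α β hαβ (2 * h), lamf_shift α β hαβ (2 * h + 1)]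
      ring
  -- step 3
  have step3 : (1 - β ^ 2 * x) * (∑' h, c2f α β h * x ^ h) = ∑' h, c3f α β h * x ^ h := by
    refine mul_geom_shift _ _ ?_ ?_ Sc2 Sc3
    · show c3f α β 0 = c2f α β 0
      simp [c3f, c2f, lamf, Finset.sum_range_succ]
    · intro h
      match h with
      | 0 =>
          show c3f α β 1 = c2f α β 1 - β ^ 2 * c2f α β 0
          have l0 : lamf α β 0 = 1 := by simp [lamf]
          have l1 : lamf α β 1 = α + β := by
            simp [lamf, Finset.sum_range_succ]
          rw [c3f, c2f, c2f, l0, l1]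
          linear_combination β * hαβ
      | (k + 1) =>
          show c3f α β (k + 2) = c2f α β (k + 2) - β ^ 2 * c2f α β (k + 1)
          have : c3f α β (k + 2) = 0 := by simp [c3f]
          rw [this, c2f, c2f]
          have e : 2 * (k + 1) = 2 * k + 2 := by omega
          rw [e]
          ring
  -- evaluate the finitely supported series
  have tsum3 : (∑' h, c3f α β h * x ^ h) = 1 + (α + β) + x := by
    rw [tsum_eq_sum (s := ({0, 1} : Finset ℕ)) (fun b hb => by
      match b with
      | 0 => simp at hb
      | 1 => simp at hb
      | (k + 2) => simp [c3f])]
    simp [c3f]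
  -- nonvanishing
  have key : ∀ z : ℂ, ‖z‖ < 1 → (1 : ℂ) - z ≠ 0 := by
    intro z hz h
    rw [sub_eq_zero] at h
    rw [← h] at hz
    simp at hz
  have n1 : (1 : ℂ) - x ≠ 0 := key x hx
  have n2 : (1 : ℂ) - α ^ 2 * x ≠ 0 := by
    refine key _ ?_
    rw [norm_mul, norm_pow, show ‖α‖ = 1 from hα, one_pow, one_mul]
    exact hx
  have n3 : (1 : ℂ) - β ^ 2 * x ≠ 0 := by
    refine key _ ?_
    rw [norm_mul, norm_pow, show ‖β‖ = 1 from hβ, one_pow, one_mul]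
    exact hx
  have chain : (1 - β ^ 2 * x) * ((1 - α ^ 2 * x) * ((1 - 1 * x) *
      (∑' h, af α β h * x ^ h))) = 1 + (α + β) + x := by
    rw [step1, step2, step3, tsum3]
  rw [one_mul] at chain
  rw [← chain]
  simp only [mul_assoc, inv_mul_cancel_left₀ n1, inv_mul_cancel_left₀ n2, inv_mul_cancel_left₀ n3]

theorem local_series_odd (α β : ℂ) (hα : ‖α‖ = 1) (hβ : ‖β‖ = 1)
    (hαβ : α * β = 1) (p : ℕ) (hp : p.Prime) (s : ℂ) (hs : 0 < s.re) :
    (∑' h : ℕ,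
        (∑ m ∈ Finset.range (2 * h + 2), ∑ j ∈ Finset.range (m + 1), α ^ (m - j) * β ^ j) *
          ((p : ℂ) ^ (-s)) ^ h) =
      (1 - (p : ℂ) ^ (-s))⁻¹ * (1 - α ^ 2 * (p : ℂ) ^ (-s))⁻¹ *
        (1 - β ^ 2 * (p : ℂ) ^ (-s))⁻¹ * (1 + (α + β) + (p : ℂ) ^ (-s)) := by
  have hxnorm : ‖(p : ℂ) ^ (-s)‖ < 1 := by
    have hp0 : (0 : ℝ) < (p : ℝ) := by exact_mod_cast hp.pos
    rw [show ((p : ℂ)) = ((p : ℝ) : ℂ) by push_cast; ring,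
      Complex.norm_cpow_eq_rpow_re_of_pos hp0]
    have h1 : (1 : ℝ) < (p : ℝ) := by exact_mod_cast hp.one_lt
    have h2 : (-s).re < 0 := by simp [Complex.neg_re]; exact hs
    exact Real.rpow_lt_one_of_one_lt_of_neg h1 h2
  exact main_lemma α β hα hβ hαβ _ hxnorm
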